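/- arXiv:1702.08767 — 2 statements merged into one kernel-verified Lean document; each statement's English description precedes it below -/
import Mathlib

section
/- Let $v_1,\dots,v_N \in \mathbb{R}^N$ be linearly independent and $G = \sum_{k=1}^N \mathbb{Z} v_k$. For every $\rho \ge \sum_{k=1}^N |v_k|$ and every $x, x' \in G$ with $|x - x'| < \rho$, there exist $n \in \mathbb{N}$ and points $w_0, \dots, w_n \in B_{4^{N-1}\rho}(x')$ such that $w_0 = x'$, $w_n = x$, and $w_\ell - w_{\ell-1} \in \{\pm v_1, \dots, \pm v_N\}$ for $\ell = 1, \dots, n$. -/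
open Metric Finset

section LatticePathAux
variable {E : Type*} [NormedAddCommGroup E] [NormedSpace ℝ E]

/-- A `G`-path of length `n` from `a` to `b` with steps among `± v k`, `k < M`,
all of whose points have norm `< B`. -/
def IsLPath (v : ℕ → E) (M : ℕ) (B : ℝ) (a b : E) (n : ℕ) (w : ℕ → E) : Prop :=
  w 0 = a ∧ w n = b ∧ (∀ ℓ ≤ n, ‖w ℓ‖ < B) ∧
  (∀ ℓ, 1 ≤ ℓ → ℓ ≤ n → ∃ k, k < M ∧ (w ℓ - w (ℓ - 1) = v k ∨ w ℓ - w (ℓ - 1) = - v k))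

lemma IsLPath.mono {v : ℕ → E} {M M' : ℕ} {B B' : ℝ} {a b : E} {n : ℕ} {w : ℕ → E}
    (h : IsLPath v M B a b n w) (hM : M ≤ M') (hB : B ≤ B') : IsLPath v M' B' a b n w := by
  obtain ⟨h0, h1, h2, h3⟩ := h
  exact ⟨h0, h1, fun ℓ hℓ => lt_of_lt_of_le (h2 ℓ hℓ) hB,
    fun ℓ h1' h2' => by obtain ⟨k, hk, hs⟩ := h3 ℓ h1' h2'; exact ⟨k, lt_of_lt_of_le hk hM, hs⟩⟩

lemma isLPath_nil {v : ℕ → E} {M : ℕ} {B : ℝ} (a : E) (ha : ‖a‖ < B) :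
    IsLPath v M B a a 0 (fun _ => a) :=
  ⟨rfl, rfl, fun _ _ => ha, fun ℓ h1 h2 => absurd (h1.trans h2) (by omega)⟩

lemma isLPath_single {v : ℕ → E} {M : ℕ} {B : ℝ} (a u : E) (k : ℕ) (hk : k < M)
    (hu : u = v k ∨ u = -v k) (ha : ‖a‖ < B) (hau : ‖a + u‖ < B) :
    IsLPath v M B a (a + u) 1 (fun ℓ => if ℓ = 0 then a else a + u) := by
  refine ⟨if_pos rfl, if_neg one_ne_zero, ?_, ?_⟩
  · intro ℓ _; by_cases h : ℓ = 0 <;> simp [h, ha, hau]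
  · intro ℓ h1 h2
    have : ℓ = 1 := le_antisymm h2 h1
    subst this
    refine ⟨k, hk, ?_⟩
    simpa using hu

lemma IsLPath.translate {v : ℕ → E} {M : ℕ} {B : ℝ} {b : E} {n : ℕ} {w : ℕ → E}
    (h : IsLPath v M B 0 b n w) (a : E) :
    IsLPath v M (‖a‖ + B) a (a + b) n (fun ℓ => a + w ℓ) := by
  obtain ⟨h0, h1, h2, h3⟩ := h
  refine ⟨by simp [h0], by simp [h1], ?_, ?_⟩
  · intro ℓ hℓ
    calc ‖a + w ℓ‖ ≤ ‖a‖ + ‖w ℓ‖ := norm_add_le _ _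
    _ < ‖a‖ + B := by linarith [h2 ℓ hℓ]
  · intro ℓ h1' h2'
    obtain ⟨k, hk, hs⟩ := h3 ℓ h1' h2'
    refine ⟨k, hk, ?_⟩
    simpa [add_sub_add_left_eq_sub] using hs

lemma IsLPath.concat {v : ℕ → E} {M : ℕ} {B : ℝ} {a b c : E} {n1 n2 : ℕ} {w1 w2 : ℕ → E}
    (h1 : IsLPath v M B a b n1 w1) (h2 : IsLPath v M B b c n2 w2) :
    IsLPath v M B a c (n1 + n2) (fun ℓ => if ℓ ≤ n1 then w1 ℓ else w2 (ℓ - n1)) := by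
  obtain ⟨g0, g1, g2, g3⟩ := h1
  obtain ⟨f0, f1, f2, f3⟩ := h2
  have hw2eq : ∀ ℓ, n1 ≤ ℓ → (if ℓ ≤ n1 then w1 ℓ else w2 (ℓ - n1)) = w2 (ℓ - n1) := by
    intro ℓ hℓ
    by_cases h : ℓ ≤ n1
    · have : ℓ = n1 := le_antisymm h hℓ
      subst this
      simp [g1, f0.symm]
    · simp [h]
  refine ⟨by simp [g0], ?_, ?_, ?_⟩
  · beta_reduce
    rw [hw2eq _ (Nat.le_add_right _ _)]
    simpa using f1
  · intro ℓ hℓ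
    by_cases h : ℓ ≤ n1
    · simpa [h] using g2 ℓ h
    · beta_reduce
      rw [if_neg h]
      exact f2 _ (by omega)
  · intro ℓ hℓ1 hℓ2
    by_cases h : ℓ ≤ n1
    · have h' : ℓ - 1 ≤ n1 := by omega
      obtain ⟨k, hk, hs⟩ := g3 ℓ hℓ1 h
      exact ⟨k, hk, by simpa [h, h'] using hs⟩
    · have hn1 : n1 ≤ ℓ - 1 := by omega
      obtain ⟨k, hk, hs⟩ := f3 (ℓ - n1) (by omega) (by omega)
      refine ⟨k, hk, ?_⟩
      beta_reduce
      rw [hw2eq ℓ (by omega), hw2eq (ℓ - 1) hn1]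
      have : ℓ - 1 - n1 = ℓ - n1 - 1 := by omega
      rw [this]
      exact hs

set_option maxHeartbeats 1000000 in
lemma lattice_path_aux :
    ∀ (M : ℕ) (v : ℕ → E) (ρ : ℝ) (c : ℕ → ℤ),
      (∑ k ∈ Finset.range M, ‖v k‖) ≤ ρ →
      ‖∑ k ∈ Finset.range M, c k • v k‖ < ρ →
      ∃ n w, IsLPath v M ((4:ℝ) ^ (M - 1) * ρ) 0 (∑ k ∈ Finset.range M, c k • v k) n w := by
  intro M
  induction M with
  | zero =>
    intro v ρ c hσ hX
    simp only [range_zero, sum_empty, norm_zero] at hX ⊢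
    exact ⟨0, _, isLPath_nil 0 (by simpa using hX)⟩
  | succ M ih =>
    cases M with
    | zero =>
      intro v ρ c hσ hX
      simp only [show (0:ℕ)+1 = 1 from rfl, sum_range_one] at hX ⊢
      set sg : ℝ := ((c 0).sign : ℝ) with hsg
      set u : E := sg • v 0 with hu
      set K : ℕ := (c 0).natAbs with hK
      have hcast : c 0 • v 0 = ((c 0 : ℝ)) • v 0 := (Int.cast_smul_eq_zsmul ℝ _ _).symm
      have hsgK : sg * (K : ℝ) = (c 0 : ℝ) := by
        rw [hsg, hK]
        have h := congrArg (fun z : ℤ => (z : ℝ)) (Int.sign_mul_natAbs (c 0))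
        push_cast at h
        convert h using 2
        simp [Nat.cast_natAbs]
      have hKu : ((K : ℕ) : ℝ) • u = c 0 • v 0 := by
        rw [hcast, hu, smul_smul, mul_comm, hsgK]
      refine ⟨K, fun j => ((j : ℕ) : ℝ) • u, by norm_num, hKu, ?_, ?_⟩
      · intro ℓ hℓ
        have h1 : ‖((ℓ : ℕ) : ℝ) • u‖ = (ℓ : ℝ) * ‖u‖ := by
          rw [norm_smul, Real.norm_eq_abs, abs_of_nonneg (by positivity)]
        have h2 : ‖c 0 • v 0‖ = (K : ℝ) * ‖u‖ := by
          rw [← hKu, norm_smul, Real.norm_eq_abs, abs_of_nonneg (by positivity)]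
        have : (ℓ : ℝ) * ‖u‖ ≤ (K : ℝ) * ‖u‖ :=
          mul_le_mul_of_nonneg_right (by exact_mod_cast hℓ) (norm_nonneg _)
        rw [h1]
        calc (ℓ:ℝ) * ‖u‖ ≤ (K:ℝ) * ‖u‖ := this
        _ = ‖c 0 • v 0‖ := h2.symm
        _ < ρ := hX
        _ ≤ 4 ^ (1 - 1 : ℕ) * ρ := by norm_num
      · intro ℓ h1 h2
        have hc0 : c 0 ≠ 0 := by
          intro h
          rw [hK, h] at h2
          simp at h2
          omega
        have hdiff : ((ℓ : ℕ) : ℝ) • u - (((ℓ - 1 : ℕ) : ℕ) : ℝ) • u = u := by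
          rw [← sub_smul]
          have : ((ℓ : ℕ) : ℝ) - (((ℓ - 1 : ℕ) : ℕ) : ℝ) = 1 := by
            push_cast [h1]
            ring
          rw [this, one_smul]
        refine ⟨0, Nat.zero_lt_one, ?_⟩
        rcases hc0.lt_or_gt with h | h
        · right
          rw [hdiff, hu, hsg, Int.sign_eq_neg_one_of_neg h]
          push_cast
          rw [neg_one_smul]
        · left
          rw [hdiff, hu, hsg, Int.sign_eq_one_of_pos h]
          push_cast
          rw [one_smul]
    | succ M' =>
      intro v ρ c hσ hX
      have hρ0 : 0 < ρ := lt_of_le_of_lt (norm_nonneg _) hX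
      set L : ℕ := M' + 1 with hLdef
      change (∀ (v : ℕ → E) (ρ : ℝ) (c : ℕ → ℤ), ∑ k ∈ range (M'+1), ‖v k‖ ≤ ρ → ‖∑ k ∈ range (M'+1), c k • v k‖ < ρ → ∃ n w, IsLPath v (M'+1) (4 ^ M' * ρ) 0 (∑ k ∈ range (M'+1), c k • v k) n w) at ih
      change ∑ k ∈ range (M'+2), ‖v k‖ ≤ ρ at hσ
      change ‖∑ k ∈ range (M'+2), c k • v k‖ < ρ at hX
      change ∃ n w, IsLPath v (M'+2) ((4:ℝ) ^ (M'+1) * ρ) 0 (∑ k ∈ range (M'+2), c k • v k) n w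
      set σ : ℝ := ∑ k ∈ Finset.range L, ‖v k‖ with hσdef
      have hσv : σ + ‖v L‖ ≤ ρ := by
        rw [hσdef]
        rw [show M' + 2 = L + 1 from rfl, sum_range_succ] at hσ
        exact hσ
      have hσ0 : (0:ℝ) ≤ σ := Finset.sum_nonneg fun k _ => norm_nonneg _
      have hvL0 : (0:ℝ) ≤ ‖v L‖ := norm_nonneg _
      have hσρ : σ ≤ ρ := by linarith
      have hbig : (1:ℝ) ≤ 4 ^ M' := one_le_pow₀ (by norm_num)
      have hpow : (4:ℝ) ^ (M'+1) = 4 ^ M' * 4 := pow_succ 4 M'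
      by_cases hc : c L = 0
      · have hXeq : ∑ k ∈ Finset.range (M'+2), c k • v k = ∑ k ∈ Finset.range L, c k • v k := by
          rw [show M' + 2 = L + 1 from rfl, sum_range_succ, hc]
          simp
        rw [hXeq] at hX ⊢
        obtain ⟨n, w, hw⟩ := ih v ρ c hσρ hX
        refine ⟨n, w, hw.mono (by omega) ?_⟩
        apply mul_le_mul_of_nonneg_right _ hρ0.le
        exact pow_le_pow_right₀ (by norm_num) (by omega)
      · set K : ℕ := (c L).natAbs with hKdef
        have hK1 : 1 ≤ K := Int.natAbs_pos.mpr hc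
        have hKR : (1:ℝ) ≤ (K:ℝ) := by exact_mod_cast hK1
        have hK0 : ((K:ℕ):ℝ) ≠ 0 := by positivity
        set sg : ℝ := ((c L).sign : ℝ) with hsgdef
        have hsgcases : sg = 1 ∨ sg = -1 := by
          rcases lt_or_gt_of_ne hc with h | h
          · right; rw [hsgdef, Int.sign_eq_neg_one_of_neg h]; norm_num
          · left; rw [hsgdef, Int.sign_eq_one_of_pos h]; norm_num
        have hsgK : sg * (K : ℝ) = (c L : ℝ) := by
          rw [hsgdef, hKdef]
          have h := congrArg (fun z : ℤ => (z : ℝ)) (Int.sign_mul_natAbs (c L))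
          push_cast at h
          convert h using 2
          simp [Nat.cast_natAbs]
        set u : E := sg • v L with hudef
        have hu : u = v L ∨ u = -v L := by
          rcases hsgcases with h | h <;> rw [hudef, h] <;> simp
        have hnu : ‖u‖ = ‖v L‖ := by rcases hu with h | h <;> rw [h] <;> simp
        set X : E := ∑ k ∈ Finset.range (M'+2), c k • v k with hXdef
        have hXr : X = (∑ k ∈ Finset.range L, ((c k : ℝ)) • v k) + ((c L : ℝ)) • v L := by
          rw [hXdef, show M' + 2 = L + 1 from rfl, sum_range_succ]
          simp [Int.cast_smul_eq_zsmul]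
        set r : ℕ → ℕ → ℤ := fun j k => round (((j:ℕ):ℝ)/((K:ℕ):ℝ) * ((c k):ℝ)) with hrdef
        set y : ℕ → E := fun j => (∑ k ∈ Finset.range L, ((r j k : ℝ)) • v k) + ((((j:ℕ)):ℝ) * sg) • v L with hydef
        have hy0 : y 0 = 0 := by simp [hydef, hrdef]
        have hyK : y K = X := by
          rw [hydef, hXr]
          simp only []
          congr 1
          · refine Finset.sum_congr rfl fun k _ => ?_
            have : r K k = c k := by
              rw [hrdef]
              simp only []
              rw [div_self hK0, one_mul, round_intCast]
            rw [this]
          · rw [mul_comm, hsgK]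
        have key : ∀ j : ℕ, y j - ((((j:ℕ)):ℝ)/((K:ℕ):ℝ)) • X
            = ∑ k ∈ Finset.range L, (((r j k : ℝ)) - ((j:ℕ):ℝ)/((K:ℕ):ℝ) * ((c k):ℝ)) • v k := by
          intro j
          rw [hydef, hXr]
          simp only []
          rw [smul_add, Finset.smul_sum]
          simp only [smul_smul]
          rw [add_sub_add_comm, ← Finset.sum_sub_distrib]
          have hcoe : (((j:ℕ):ℝ) * sg) • v L - (((j:ℕ):ℝ)/((K:ℕ):ℝ) * ((c L):ℝ)) • v L = 0 := by
            rw [← sub_smul]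
            have : ((j:ℕ):ℝ) * sg - ((j:ℕ):ℝ)/((K:ℕ):ℝ) * ((c L):ℝ) = 0 := by
              rw [← hsgK]
              field_simp
              ring
            rw [this, zero_smul]
          rw [hcoe, add_zero]
          exact Finset.sum_congr rfl fun k _ => by rw [sub_smul]
        have hkey : ∀ j : ℕ, ‖y j - ((((j:ℕ)):ℝ)/((K:ℕ):ℝ)) • X‖ ≤ σ / 2 := by
          intro j
          rw [key j]
          refine le_trans (norm_sum_le _ _) ?_
          have hterm : ∀ k ∈ Finset.range L,
              ‖(((r j k : ℝ)) - ((j:ℕ):ℝ)/((K:ℕ):ℝ) * ((c k):ℝ)) • v k‖ ≤ (1/2) * ‖v k‖ := by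
            intro k _
            rw [norm_smul, Real.norm_eq_abs]
            refine mul_le_mul_of_nonneg_right ?_ (norm_nonneg _)
            rw [hrdef]
            simp only []
            rw [abs_sub_comm]
            exact abs_sub_round _
          refine le_trans (Finset.sum_le_sum hterm) ?_
          rw [← Finset.mul_sum, ← hσdef]
          linarith
        have hyb : ∀ j ≤ K, ‖y j‖ < ρ + σ / 2 := by
          intro j hj
          have h1 := hkey j
          have h2 : ‖((((j:ℕ)):ℝ)/((K:ℕ):ℝ)) • X‖ < ρ := by
            rw [norm_smul, Real.norm_eq_abs, abs_of_nonneg (by positivity)]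
            calc ((j:ℕ):ℝ)/((K:ℕ):ℝ) * ‖X‖ ≤ 1 * ‖X‖ := by
                  refine mul_le_mul_of_nonneg_right ?_ (norm_nonneg _)
                  rw [div_le_one (by positivity)]
                  exact_mod_cast hj
              _ = ‖X‖ := one_mul _
              _ < ρ := hX
          have h3 := norm_add_le (y j - ((((j:ℕ)):ℝ)/((K:ℕ):ℝ)) • X) (((((j:ℕ)):ℝ)/((K:ℕ):ℝ)) • X)
          rw [sub_add_cancel] at h3
          linarith
        have hT : ∀ j : ℕ, y (j+1) - y j - u = ∑ k ∈ Finset.range L, ((r (j+1) k - r j k)) • v k := by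
          intro j
          simp only [hydef, hudef]
          rw [add_sub_add_comm, add_sub_assoc, ← Finset.sum_sub_distrib]
          have hcoe : ((((j+1:ℕ)):ℝ) * sg) • v L - ((((j:ℕ)):ℝ) * sg) • v L - sg • v L = 0 := by
            rw [← sub_smul, ← sub_smul]
            have : (((j+1:ℕ)):ℝ) * sg - (((j:ℕ)):ℝ) * sg - sg = 0 := by push_cast; ring
            rw [this, zero_smul]
          rw [hcoe, add_zero]
          refine Finset.sum_congr rfl fun k _ => ?_
          rw [← sub_smul, ← Int.cast_sub, Int.cast_smul_eq_zsmul]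
        have hTnorm : ∀ j : ℕ, ‖∑ k ∈ Finset.range L, ((r (j+1) k - r j k)) • v k‖ < 2 * ρ := by
          intro j
          rw [← hT j]
          have hdec : y (j+1) - y j - u =
              (y (j+1) - ((((j+1:ℕ)):ℝ)/((K:ℕ):ℝ)) • X) - (y j - ((((j:ℕ)):ℝ)/((K:ℕ):ℝ)) • X)
                + ((1:ℝ)/((K:ℕ):ℝ)) • X - u := by
            have hq : ((((j+1:ℕ)):ℝ)/((K:ℕ):ℝ)) • X - ((((j:ℕ)):ℝ)/((K:ℕ):ℝ)) • X
                = ((1:ℝ)/((K:ℕ):ℝ)) • X := by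
              rw [← sub_smul, div_sub_div_same]
              norm_num
            rw [← hq]
            abel
          rw [hdec]
          have h1 := hkey (j+1)
          have h2 := hkey j
          have h3 : ‖((1:ℝ)/((K:ℕ):ℝ)) • X‖ < ρ := by
            rw [norm_smul, Real.norm_eq_abs, abs_of_nonneg (by positivity)]
            calc (1:ℝ)/((K:ℕ):ℝ) * ‖X‖ ≤ 1 * ‖X‖ := by
                  refine mul_le_mul_of_nonneg_right ?_ (norm_nonneg _)
                  rw [div_le_one (by positivity)]
                  exact hKR
              _ = ‖X‖ := one_mul _
              _ < ρ := hX
          set A : E := y (j+1) - ((((j+1:ℕ)):ℝ)/((K:ℕ):ℝ)) • X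
          set B : E := y j - ((((j:ℕ)):ℝ)/((K:ℕ):ℝ)) • X
          set C : E := ((1:ℝ)/((K:ℕ):ℝ)) • X
          have htri : ‖A - B + C - u‖ ≤ ‖A‖ + ‖B‖ + ‖C‖ + ‖u‖ := by
            calc ‖A - B + C - u‖ ≤ ‖A - B + C‖ + ‖u‖ := norm_sub_le _ _
              _ ≤ ‖A - B‖ + ‖C‖ + ‖u‖ := by linarith [norm_add_le (A - B) C]
              _ ≤ ‖A‖ + ‖B‖ + ‖C‖ + ‖u‖ := by linarith [norm_sub_le A B]
          rw [hnu] at htri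
          linarith
        have h4 : (4:ℝ) ≤ 4 ^ (M'+1) := by rw [hpow]; nlinarith
        have inner : ∀ j : ℕ, j ≤ K → ∃ n w, IsLPath v (M'+2) ((4:ℝ) ^ (M'+1) * ρ) 0 (y j) n w := by
          intro j
          induction j with
          | zero =>
            intro _
            refine ⟨0, fun _ => 0, ?_⟩
            rw [← hy0]
            exact isLPath_nil (y 0) (by rw [hy0, norm_zero]; positivity)
          | succ j ihj =>
            intro hjK
            obtain ⟨n1, w1, hw1⟩ := ihj (by omega)
            have hyj := hyb j (by omega)
            have hyju : ‖y j + u‖ < 2 * ρ := by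
              calc ‖y j + u‖ ≤ ‖y j‖ + ‖u‖ := norm_add_le _ _
                _ < (ρ + σ/2) + ‖v L‖ := by rw [hnu]; linarith
                _ ≤ 2 * ρ := by linarith
            have hB1 : ‖y j‖ < 4 ^ (M'+1) * ρ := by nlinarith
            have hB2 : ‖y j + u‖ < 4 ^ (M'+1) * ρ := by nlinarith
            have step := isLPath_single (v := v) (M := M'+2) (B := (4:ℝ) ^ (M'+1) * ρ)
              (y j) u L (by omega) hu hB1 hB2
            obtain ⟨n2, w2, hw2⟩ := ih v (2*ρ) (fun k => r (j+1) k - r j k) (by linarith) (hTnorm j)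
            have htr := hw2.translate (y j + u)
            have hbd : ‖y j + u‖ + 4 ^ M' * (2 * ρ) ≤ 4 ^ (M'+1) * ρ := by nlinarith
            have hmono := htr.mono (show L ≤ M' + 2 by omega) hbd
            have hend : y j + u + (∑ k ∈ Finset.range L, ((r (j+1) k - r j k)) • v k) = y (j+1) := by
              rw [← hT j]; abel
            rw [hend] at hmono
            exact ⟨n1 + 1 + n2, _, (hw1.concat step).concat hmono⟩
        obtain ⟨n, w, hw⟩ := inner K le_rfl
        rw [hyK] at hw
        exact ⟨n, w, hw⟩

end LatticePathAux

/-- Lemma (lattice paths): for linearly independent `v 0, …, v (N-1)` generating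
the lattice `G`, every `ρ ≥ ∑ ‖v k‖` and all lattice points `x, x'` with
`|x - x'| < ρ`, there is a `G`-path `w 0 = x', …, w n = x` inside the ball
`B_{4^(N-1) ρ}(x')` with steps in `{± v 1, …, ± v N}`. -/
theorem lattice_path (N : ℕ)
    (v : Fin N → EuclideanSpace ℝ (Fin N))
    (hv : LinearIndependent ℝ v)
    (ρ : ℝ) (hρ : ∑ k, ‖v k‖ ≤ ρ)
    (x x' : EuclideanSpace ℝ (Fin N))
    (hx : ∃ m : Fin N → ℤ, x = ∑ k, (m k : ℝ) • v k)
    (hx' : ∃ m : Fin N → ℤ, x' = ∑ k, (m k : ℝ) • v k)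
    (hdist : dist x x' < ρ) :
    ∃ (n : ℕ) (w : ℕ → EuclideanSpace ℝ (Fin N)),
      w 0 = x' ∧ w n = x ∧
      (∀ ℓ ≤ n, dist (w ℓ) x' < 4 ^ (N - 1) * ρ) ∧
      (∀ ℓ, 1 ≤ ℓ → ℓ ≤ n → ∃ k : Fin N, w ℓ - w (ℓ - 1) = v k ∨ w ℓ - w (ℓ - 1) = -v k) := by
  obtain ⟨m, hm⟩ := hx
  obtain ⟨m', hm'⟩ := hx'
  set v' : ℕ → EuclideanSpace ℝ (Fin N) := fun k => if h : k < N then v ⟨k, h⟩ else 0 with hv'def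
  set c : ℕ → ℤ := fun k => if h : k < N then m ⟨k, h⟩ - m' ⟨k, h⟩ else 0 with hcdef
  have hsum : ∑ k ∈ Finset.range N, c k • v' k = x - x' := by
    have h1 : ∑ k ∈ Finset.range N, c k • v' k = ∑ k : Fin N, ((m k - m' k : ℤ)) • v k := by
      rw [← Fin.sum_univ_eq_sum_range (fun k => c k • v' k) N]
      refine Finset.sum_congr rfl fun k _ => ?_
      simp [hcdef, hv'def, k.isLt]
    rw [h1, hm, hm', ← Finset.sum_sub_distrib]
    refine Finset.sum_congr rfl fun k _ => ?_
    rw [← Int.cast_smul_eq_zsmul ℝ]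
    push_cast
    rw [sub_smul]
  have hnorm : ∑ k ∈ Finset.range N, ‖v' k‖ ≤ ρ := by
    rw [← Fin.sum_univ_eq_sum_range (fun k => ‖v' k‖) N]
    refine le_trans (le_of_eq (Finset.sum_congr rfl fun k _ => ?_)) hρ
    simp [hv'def, k.isLt]
  have hdist' : ‖∑ k ∈ Finset.range N, c k • v' k‖ < ρ := by
    rw [hsum, ← dist_eq_norm]
    exact hdist
  obtain ⟨n, w, h0, h1, h2, h3⟩ := lattice_path_aux N v' ρ c hnorm hdist'
  refine ⟨n, fun ℓ => x' + w ℓ, by simp [h0], ?_, ?_, ?_⟩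
  · show x' + w n = x
    rw [h1, hsum]
    abel
  · intro ℓ hℓ
    rw [dist_eq_norm, add_sub_cancel_left]
    exact h2 ℓ hℓ
  · intro ℓ hl1 hl2
    obtain ⟨k, hk, hs⟩ := h3 ℓ hl1 hl2
    refine ⟨⟨k, hk⟩, ?_⟩
    have hvk : v' k = v ⟨k, hk⟩ := dif_pos hk
    rw [← hvk]
    simpa [add_sub_add_left_eq_sub] using hs
end

section
/- Let $J : \mathbb{R}^N \times \mathbb{R}^N \to [0,\infty]$ be measurable and symmetric, and let $\Omega \subset \mathbb{R}^N$ be open. For any $u \in \mathcal{V}^J(\Omega)$ and $v \in \mathcal{D}^J(\Omega)$, one has $\int_{\mathbb{R}^N}\int_{\mathbb{R}^N} |u(x)-u(y)|\,|v(x)-v(y)|\,J(x,y)\,dx\,dy \le (2+\sqrt{2})\,\rho(u,\Omega)^{1/2}\,\mathcal{E}_J(v,v)^{1/2} < \infty$. -/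
open MeasureTheory ENNReal Set

noncomputable section

variable {N : ℕ}

/-- `ρ(u,Ω) = ½ ∫_Ω ∫_{ℝ^N} (u(x)-u(y))² J(x,y) dy dx`. -/
def rhoForm (J : EuclideanSpace ℝ (Fin N) → EuclideanSpace ℝ (Fin N) → ℝ≥0∞)
    (Ω : Set (EuclideanSpace ℝ (Fin N))) (u : EuclideanSpace ℝ (Fin N) → ℝ) : ℝ≥0∞ :=
  (1 / 2) * ∫⁻ x in Ω, ∫⁻ y, ENNReal.ofReal ((u x - u y) ^ 2) * J x y

/-- `ℰ_J(v,v) = ½ ∫∫ (v(x)-v(y))² J(x,y) dx dy`. -/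
def energyForm (J : EuclideanSpace ℝ (Fin N) → EuclideanSpace ℝ (Fin N) → ℝ≥0∞)
    (v : EuclideanSpace ℝ (Fin N) → ℝ) : ℝ≥0∞ :=
  (1 / 2) * ∫⁻ x, ∫⁻ y, ENNReal.ofReal ((v x - v y) ^ 2) * J x y

private lemma half_rpow_mul_self (w : ℝ≥0∞) : w ^ (1/2 : ℝ) * w ^ (1/2 : ℝ) = w := by
  rw [← sq, ← ENNReal.rpow_natCast (w ^ ((1:ℝ)/2)) 2, ← ENNReal.rpow_mul]
  norm_num

private lemma testing_aux {α : Type*} [MeasurableSpace α] (μ : Measure α) [SigmaFinite μ]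
    (J : α → α → ℝ≥0∞) (hJmeas : Measurable fun p : α × α => J p.1 p.2)
    (hJsym : ∀ x y, J x y = J y x)
    (Ω : Set α) (hΩ : MeasurableSet Ω)
    (u v : α → ℝ) (hu : Measurable u) (hv : Measurable v)
    (hv0 : ∀ x ∉ Ω, v x = 0) :
    (∫⁻ x, ∫⁻ y, ENNReal.ofReal (|u x - u y| * |v x - v y|) * J x y ∂μ ∂μ)
      ≤ (2 * ∫⁻ x in Ω, ∫⁻ y, ENNReal.ofReal ((u x - u y) ^ 2) * J x y ∂μ ∂μ) ^ (1 / 2 : ℝ)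
        * (∫⁻ x, ∫⁻ y, ENNReal.ofReal ((v x - v y) ^ 2) * J x y ∂μ ∂μ) ^ (1 / 2 : ℝ) := by
  classical
  set ν := μ.prod μ with hν
  set K : α × α → ℝ≥0∞ := fun p => ENNReal.ofReal ((u p.1 - u p.2) ^ 2) * J p.1 p.2 with hK
  set L : α × α → ℝ≥0∞ := fun p => ENNReal.ofReal ((v p.1 - v p.2) ^ 2) * J p.1 p.2 with hL
  set F : α × α → ℝ≥0∞ :=
    fun p => ENNReal.ofReal |u p.1 - u p.2| * (J p.1 p.2) ^ (1/2 : ℝ) with hF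
  set G : α × α → ℝ≥0∞ :=
    fun p => ENNReal.ofReal |v p.1 - v p.2| * (J p.1 p.2) ^ (1/2 : ℝ) with hG
  set S : Set (α × α) := (Ω ×ˢ univ) ∪ (univ ×ˢ Ω) with hS
  have hSm : MeasurableSet S := (hΩ.prod MeasurableSet.univ).union (MeasurableSet.univ.prod hΩ)
  have hudm : Measurable fun p : α × α => u p.1 - u p.2 :=
    (hu.comp measurable_fst).sub (hu.comp measurable_snd)
  have hvdm : Measurable fun p : α × α => v p.1 - v p.2 :=
    (hv.comp measurable_fst).sub (hv.comp measurable_snd)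
  have hKm : Measurable K := (ENNReal.measurable_ofReal.comp (hudm.pow_const 2)).mul hJmeas
  have hLm : Measurable L := (ENNReal.measurable_ofReal.comp (hvdm.pow_const 2)).mul hJmeas
  have hFm : Measurable F :=
    (ENNReal.measurable_ofReal.comp hudm.abs).mul (hJmeas.pow_const _)
  have hGm : Measurable G :=
    (ENNReal.measurable_ofReal.comp hvdm.abs).mul (hJmeas.pow_const _)
  have hfm : Measurable fun p : α × α =>
      ENNReal.ofReal (|u p.1 - u p.2| * |v p.1 - v p.2|) * J p.1 p.2 :=
    (ENNReal.measurable_ofReal.comp (hudm.abs.mul hvdm.abs)).mul hJmeas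
  -- pointwise bound
  have hpt : ∀ p : α × α, ENNReal.ofReal (|u p.1 - u p.2| * |v p.1 - v p.2|) * J p.1 p.2
      ≤ (S.indicator F * G) p := by
    intro p
    by_cases hp : p ∈ S
    · have hFG : F p * G p
          = (ENNReal.ofReal |u p.1 - u p.2| * ENNReal.ofReal |v p.1 - v p.2|)
            * ((J p.1 p.2) ^ (1/2 : ℝ) * (J p.1 p.2) ^ (1/2 : ℝ)) := mul_mul_mul_comm _ _ _ _
      rw [Pi.mul_apply, indicator_of_mem hp, hFG, half_rpow_mul_self,
        ← ENNReal.ofReal_mul (abs_nonneg _)]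
    · have h1 : p.1 ∉ Ω := fun h => hp (Or.inl ⟨h, mem_univ _⟩)
      have h2 : p.2 ∉ Ω := fun h => hp (Or.inr ⟨mem_univ _, h⟩)
      rw [hv0 _ h1, hv0 _ h2]
      simp
  -- squares
  have hFsq : ∀ p : α × α, F p ^ (2:ℝ) = K p := by
    intro p
    rw [hF, hK]
    simp only []
    rw [ENNReal.mul_rpow_of_nonneg _ _ (by norm_num : (0:ℝ) ≤ 2),
      ← ENNReal.rpow_mul, ENNReal.ofReal_rpow_of_nonneg (abs_nonneg _) (by norm_num : (0:ℝ) ≤ 2)]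
    norm_num
  have hGsq : ∀ p : α × α, G p ^ (2:ℝ) = L p := by
    intro p
    rw [hG, hL]
    simp only []
    rw [ENNReal.mul_rpow_of_nonneg _ _ (by norm_num : (0:ℝ) ≤ 2),
      ← ENNReal.rpow_mul, ENNReal.ofReal_rpow_of_nonneg (abs_nonneg _) (by norm_num : (0:ℝ) ≤ 2)]
    norm_num
  -- the u-side integral bound
  have hres1 : (∫⁻ z in Ω ×ˢ (univ : Set α), K z ∂ν)
      = ∫⁻ x in Ω, ∫⁻ y, K (x, y) ∂μ ∂μ := by
    rw [hν, ← Measure.prod_restrict, Measure.restrict_univ, lintegral_prod _ hKm.aemeasurable]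
  have hKsymm : ∀ x y : α, K (x, y) = K (y, x) := by
    intro x y
    simp only [hK]
    rw [hJsym, show (u x - u y)^2 = (u y - u x)^2 by ring]
  have hres2 : (∫⁻ z in (univ : Set α) ×ˢ Ω, K z ∂ν)
      = ∫⁻ x in Ω, ∫⁻ y, K (x, y) ∂μ ∂μ := by
    rw [hν, ← Measure.prod_restrict, Measure.restrict_univ, lintegral_prod _ hKm.aemeasurable]
    rw [lintegral_lintegral_swap (μ := μ) (ν := μ.restrict Ω)
      (f := fun x y => K (x, y)) hKm.aemeasurable]
    exact lintegral_congr fun a => lintegral_congr fun b => hKsymm b a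
  have hindsq : ∀ p : α × α, (S.indicator F) p ^ (2:ℝ) = S.indicator K p := by
    intro p
    by_cases hp : p ∈ S
    · rw [indicator_of_mem hp, indicator_of_mem hp, hFsq]
    · rw [indicator_of_notMem hp, indicator_of_notMem hp,
        ENNReal.zero_rpow_of_pos (by norm_num)]
  have hIF : (∫⁻ p, (S.indicator F) p ^ (2:ℝ) ∂ν)
      ≤ 2 * ∫⁻ x in Ω, ∫⁻ y, ENNReal.ofReal ((u x - u y) ^ 2) * J x y ∂μ ∂μ := by
    simp_rw [hindsq]
    rw [lintegral_indicator hSm]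
    calc (∫⁻ p in S, K p ∂ν)
        ≤ (∫⁻ p in Ω ×ˢ (univ : Set α), K p ∂ν)
          + ∫⁻ p in (univ : Set α) ×ˢ Ω, K p ∂ν := lintegral_union_le _ _ _
      _ = 2 * ∫⁻ x in Ω, ∫⁻ y, K (x, y) ∂μ ∂μ := by rw [hres1, hres2, two_mul]
      _ = 2 * ∫⁻ x in Ω, ∫⁻ y, ENNReal.ofReal ((u x - u y) ^ 2) * J x y ∂μ ∂μ := rfl
  have hIG : (∫⁻ p, G p ^ (2:ℝ) ∂ν)
      = ∫⁻ x, ∫⁻ y, ENNReal.ofReal ((v x - v y) ^ 2) * J x y ∂μ ∂μ := by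
    simp_rw [hGsq]
    rw [hν, lintegral_prod _ hLm.aemeasurable]
  calc (∫⁻ x, ∫⁻ y, ENNReal.ofReal (|u x - u y| * |v x - v y|) * J x y ∂μ ∂μ)
      = ∫⁻ p, ENNReal.ofReal (|u p.1 - u p.2| * |v p.1 - v p.2|) * J p.1 p.2 ∂ν := by
        rw [hν, lintegral_prod _ hfm.aemeasurable]
    _ ≤ ∫⁻ p, (S.indicator F * G) p ∂ν := lintegral_mono hpt
    _ ≤ (∫⁻ p, (S.indicator F) p ^ (2:ℝ) ∂ν) ^ (1/(2:ℝ))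
        * (∫⁻ p, G p ^ (2:ℝ) ∂ν) ^ (1/(2:ℝ)) :=
        ENNReal.lintegral_mul_le_Lp_mul_Lq ν ⟨by norm_num, by norm_num, by norm_num⟩
          (hFm.indicator hSm).aemeasurable hGm.aemeasurable
    _ ≤ (2 * ∫⁻ x in Ω, ∫⁻ y, ENNReal.ofReal ((u x - u y) ^ 2) * J x y ∂μ ∂μ) ^ (1/2 : ℝ)
        * (∫⁻ x, ∫⁻ y, ENNReal.ofReal ((v x - v y) ^ 2) * J x y ∂μ ∂μ) ^ (1/2 : ℝ) := by
        rw [hIG]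
        exact mul_le_mul' (ENNReal.rpow_le_rpow hIF (by norm_num)) le_rfl

/-- Lemma (testing): for `u ∈ 𝒱^J(Ω)` and `v ∈ 𝒟^J(Ω)`,
`∫∫ |u(x)-u(y)| |v(x)-v(y)| J(x,y) dx dy ≤ (2+√2) ρ(u,Ω)^{1/2} ℰ_J(v,v)^{1/2} < ∞`. -/
theorem testing_estimate
    (J : EuclideanSpace ℝ (Fin N) → EuclideanSpace ℝ (Fin N) → ℝ≥0∞)
    (hJmeas : Measurable fun p : EuclideanSpace ℝ (Fin N) × EuclideanSpace ℝ (Fin N) => J p.1 p.2)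
    (hJsym : ∀ x y, J x y = J y x)
    (Ω : Set (EuclideanSpace ℝ (Fin N))) (hΩ : IsOpen Ω)
    (u v : EuclideanSpace ℝ (Fin N) → ℝ)
    (hu : Measurable u) (hv : Measurable v)
    -- `u ∈ 𝒱^J(Ω)`:
    (huρ : rhoForm J Ω u < ⊤)
    -- `v ∈ 𝒟^J(Ω)`:
    (hvE : energyForm J v < ⊤) (hv0 : ∀ x ∉ Ω, v x = 0) :
    (∫⁻ x, ∫⁻ y, ENNReal.ofReal (|u x - u y| * |v x - v y|) * J x y)
        ≤ ENNReal.ofReal (2 + Real.sqrt 2) * (rhoForm J Ω u) ^ (1 / 2 : ℝ)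
            * (energyForm J v) ^ (1 / 2 : ℝ) ∧
    ENNReal.ofReal (2 + Real.sqrt 2) * (rhoForm J Ω u) ^ (1 / 2 : ℝ)
        * (energyForm J v) ^ (1 / 2 : ℝ) < ⊤ := by
  have key := testing_aux volume J hJmeas hJsym Ω hΩ.measurableSet u v hu hv hv0
  have hρ : (∫⁻ x in Ω, ∫⁻ y, ENNReal.ofReal ((u x - u y) ^ 2) * J x y)
      = 2 * rhoForm J Ω u := by
    rw [rhoForm, ← mul_assoc, one_div,
      ENNReal.mul_inv_cancel (by norm_num) (by norm_num), one_mul]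
  have hE : (∫⁻ x, ∫⁻ y, ENNReal.ofReal ((v x - v y) ^ 2) * J x y)
      = 2 * energyForm J v := by
    rw [energyForm, ← mul_assoc, one_div,
      ENNReal.mul_inv_cancel (by norm_num) (by norm_num), one_mul]
  rw [hρ, hE] at key
  have hc : (2:ℝ≥0∞) ^ (1/2:ℝ) = ENNReal.ofReal (Real.sqrt 2) := by
    rw [show (2:ℝ≥0∞) = ENNReal.ofReal 2 by norm_num,
      ENNReal.ofReal_rpow_of_pos (by norm_num), ← Real.sqrt_eq_rpow]
  have hbound : (2 * (2 * rhoForm J Ω u)) ^ (1/2:ℝ) * (2 * energyForm J v) ^ (1/2:ℝ)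
      ≤ ENNReal.ofReal (2 + Real.sqrt 2) * (rhoForm J Ω u) ^ (1/2:ℝ)
        * (energyForm J v) ^ (1/2:ℝ) := by
    rw [ENNReal.mul_rpow_of_nonneg _ _ (by norm_num : (0:ℝ) ≤ 1/2),
        ENNReal.mul_rpow_of_nonneg _ _ (by norm_num : (0:ℝ) ≤ 1/2),
        ENNReal.mul_rpow_of_nonneg _ _ (by norm_num : (0:ℝ) ≤ 1/2)]
    have habc : ∀ a b c : ℝ≥0∞, a * a = 2 → a * (a * b) * (a * c) = 2 * a * b * c := by
      intro a b c h; rw [← h]; ring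
    rw [habc _ _ _ (half_rpow_mul_self 2)]
    refine mul_le_mul' (mul_le_mul' ?_ le_rfl) le_rfl
    rw [hc, show ((2:ℝ≥0∞)) = ENNReal.ofReal 2 by norm_num,
      ← ENNReal.ofReal_mul (by norm_num)]
    exact ENNReal.ofReal_le_ofReal
      (by nlinarith [Real.sq_sqrt (show (0:ℝ) ≤ 2 by norm_num), Real.sqrt_nonneg 2])
  constructor
  · exact key.trans hbound
  · refine ENNReal.mul_lt_top (ENNReal.mul_lt_top ENNReal.ofReal_lt_top ?_) ?_
    · exact ENNReal.rpow_lt_top_of_nonneg (by norm_num) huρ.ne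
    · exact ENNReal.rpow_lt_top_of_nonneg (by norm_num) hvE.ne

end
end
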